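/- Let φ: P^N ⇢ P^N be dominant over Q̄ with dynamical degree δ_φ and canonical height ĥ_φ(P) = limsup_n h(φ^n(P))/(n^{ℓ_φ} δ_φ^n). If ĥ_φ(P) > 0, then the arithmetic degree α_φ(P) = limsup_n h(φ^n(P))^{1/n} equals δ_φ. -/

import Mathlib

open Filter Topology

private lemma aux_const_rpow_tendsto (M : ℝ) (hM : 0 < M) :
    Tendsto (fun n : ℕ => M ^ ((n : ℝ)⁻¹)) atTop (𝓝 1) := by
  have h0 : Tendsto (fun n : ℕ => ((n : ℝ))⁻¹) atTop (𝓝 0) :=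
    tendsto_inv_atTop_zero.comp tendsto_natCast_atTop_atTop
  have := (tendsto_const_nhds (x := M) (f := atTop (α := ℕ))).rpow h0 (Or.inl hM.ne')
  simpa using this

private lemma aux_nat_rpow_tendsto :
    Tendsto (fun n : ℕ => (n : ℝ) ^ ((n : ℝ)⁻¹)) atTop (𝓝 1) := by
  have := tendsto_rpow_div.comp (tendsto_natCast_atTop_atTop (R := ℝ))
  simpa [one_div, Function.comp_def] using this

private lemma aux_iter {X : Type*} (φ : X → X) (h : X → ℝ) (hnn : ∀ x, 0 ≤ h x)
    (k : ℕ) (A C : ℝ) (hA : 1 ≤ A) (hC : 0 ≤ C)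
    (hbd : ∀ Q, h (φ^[k] Q) ≤ A * h Q + C) :
    ∀ m Q, h (φ^[m * k] Q) ≤ A ^ m * h Q + m * A ^ m * C := by
  have hA0 : (0:ℝ) ≤ A := le_trans zero_le_one hA
  intro m
  induction m with
  | zero => intro Q; simp
  | succ m ih =>
    intro Q
    have heq : φ^[(m + 1) * k] Q = φ^[k] (φ^[m * k] Q) := by
      rw [show (m + 1) * k = k + m * k by ring, Function.iterate_add_apply]
    rw [heq]
    have h1 := hbd (φ^[m * k] Q)
    have h2 := ih Q
    have h3 : (1:ℝ) ≤ A ^ (m + 1) := one_le_pow₀ hA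
    have h4 : (0:ℝ) ≤ A ^ m := pow_nonneg hA0 m
    have h5 := hnn (φ^[m * k] Q)
    have h6 := hnn Q
    calc h (φ^[k] (φ^[m * k] Q)) ≤ A * h (φ^[m * k] Q) + C := h1
    _ ≤ A * (A ^ m * h Q + m * A ^ m * C) + C :=
        add_le_add_left (mul_le_mul_of_nonneg_left h2 hA0) C
    _ = A ^ (m + 1) * h Q + m * A ^ (m + 1) * C + C := by ring
    _ ≤ A ^ (m + 1) * h Q + ((m : ℕ) + 1 : ℕ) * A ^ (m + 1) * C := by
        push_cast
        nlinarith [mul_le_mul_of_nonneg_right h3 hC]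

/-- If the canonical height `ĥ_φ(P) = limsup h(φ^n P)/(n^ℓ δ^n)` is positive,
then the arithmetic degree `α_φ(P) = limsup h(φ^n P)^(1/n)` equals the
dynamical degree `δ = lim (deg φ^n)^(1/n)`. Here `D n` plays the role of
`deg (φ^n)` and for each `k` one has `h (φ^k Q) ≤ D k * h Q + C_k`. -/
theorem stmt8 {X : Type*} (φ : X → X) (h : X → ℝ) (hnn : ∀ x, 0 ≤ h x)
    (D : ℕ → ℝ) (hD1 : ∀ n, 1 ≤ D n)
    (hDsub : ∀ m n, D (m + n) ≤ D m * D n)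
    (hht : ∀ k : ℕ, ∃ C : ℝ, ∀ Q, h (φ^[k] Q) ≤ D k * h Q + C)
    (δ : ℝ) (hδ : Tendsto (fun n : ℕ => D n ^ ((n : ℝ)⁻¹)) atTop (𝓝 δ))
    (ℓ : ℝ) (hℓ : 0 ≤ ℓ) (P : X)
    (hpos : 0 < Filter.limsup (fun n : ℕ =>
        ENNReal.ofReal (h (φ^[n] P) / ((n : ℝ) ^ ℓ * δ ^ n))) atTop) :
    Filter.limsup (fun n : ℕ => h (φ^[n] P) ^ ((n : ℝ)⁻¹)) atTop = δ := by
  set f : ℕ → ℝ := fun n : ℕ => h (φ^[n] P) ^ ((n : ℝ)⁻¹) with hf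
  -- δ ≥ 1
  have hδ1 : (1:ℝ) ≤ δ := by
    refine ge_of_tendsto' hδ fun n => ?_
    calc (1:ℝ) = 1 ^ ((n:ℝ)⁻¹) := (Real.one_rpow _).symm
    _ ≤ D n ^ ((n:ℝ)⁻¹) :=
      Real.rpow_le_rpow zero_le_one (hD1 n) (by positivity)
  have hδ0 : (0:ℝ) < δ := lt_of_lt_of_le one_pos hδ1
  -- nonnegativity of f
  have hfnn : ∀ n, 0 ≤ f n := fun n => Real.rpow_nonneg (hnn _) _
  -- upper bound: for every ε > 0, eventually f n ≤ δ + ε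
  have hub : ∀ ε : ℝ, 0 < ε → ∀ᶠ n in atTop, f n ≤ δ + ε := by
    intro ε hε
    -- pick k ≥ 1 with D k ^ (1/k) < δ + ε/2
    have hev : ∀ᶠ n : ℕ in atTop, D n ^ ((n:ℝ)⁻¹) < δ + ε / 2 :=
      hδ.eventually_lt_const (by linarith)
    obtain ⟨k, hk1, hkδ⟩ := ((eventually_ge_atTop 1).and hev).exists
    have hk0 : (0:ℝ) < (k:ℝ) := by exact_mod_cast hk1
    obtain ⟨C0, hC0⟩ := hht k
    set C : ℝ := max C0 0 with hCdef
    have hC : (0:ℝ) ≤ C := le_max_right _ _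
    have hbd : ∀ Q, h (φ^[k] Q) ≤ D k * h Q + C := fun Q =>
      (hC0 Q).trans (by gcongr; exact le_max_left _ _)
    have hiter := aux_iter φ h hnn k (D k) C (hD1 k) hC hbd
    set B : ℝ := (∑ r ∈ Finset.range k, h (φ^[r] P)) + 1 with hBdef
    have hB1 : (1:ℝ) ≤ B := by
      have : 0 ≤ ∑ r ∈ Finset.range k, h (φ^[r] P) :=
        Finset.sum_nonneg fun r _ => hnn _
      simp [hBdef]; linarith
    have hB0 : (0:ℝ) ≤ B := le_trans zero_le_one hB1
    have hBr : ∀ r < k, h (φ^[r] P) ≤ B := by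
      intro r hr
      have : h (φ^[r] P) ≤ ∑ r ∈ Finset.range k, h (φ^[r] P) :=
        Finset.single_le_sum (f := fun r => h (φ^[r] P)) (fun i _ => hnn _)
          (Finset.mem_range.mpr hr)
      simp [hBdef]; linarith
    have hδε1 : (1:ℝ) ≤ δ + ε / 2 := by linarith
    have hδε0 : (0:ℝ) ≤ δ + ε / 2 := by linarith
    -- D k ≤ (δ + ε/2)^k
    have hAk : D k ≤ (δ + ε / 2) ^ k := by
      have h1 : (D k ^ ((k:ℝ)⁻¹)) ^ k ≤ (δ + ε / 2) ^ k :=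
        pow_le_pow_left₀ (Real.rpow_nonneg (le_trans zero_le_one (hD1 k)) _) hkδ.le k
      calc D k = (D k ^ ((k:ℝ)⁻¹)) ^ k := by
            rw [← Real.rpow_natCast (D k ^ ((k:ℝ)⁻¹)) k, ← Real.rpow_mul
              (le_trans zero_le_one (hD1 k)), inv_mul_cancel₀ hk0.ne',
              Real.rpow_one]
      _ ≤ (δ + ε / 2) ^ k := h1
    -- key polynomial-times-exponential bound
    have key : ∀ n : ℕ, 1 ≤ n → h (φ^[n] P) ≤ (δ + ε / 2) ^ n * ((B + C) * n) := by
      intro n hn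
      have hdm : n / k * k + n % k = n := by
        rw [Nat.mul_comm]; exact Nat.div_add_mod n k
      set m := n / k
      set r := n % k
      have hrk : r < k := Nat.mod_lt _ (by omega)
      have heq : φ^[n] P = φ^[m * k] (φ^[r] P) := by
        rw [← hdm, Function.iterate_add_apply]
      have h1 : h (φ^[n] P) ≤ D k ^ m * h (φ^[r] P) + m * D k ^ m * C := by
        rw [heq]; exact hiter m (φ^[r] P)
      have hDk0 : (0:ℝ) ≤ D k := le_trans zero_le_one (hD1 k)
      have hDkm : (0:ℝ) ≤ D k ^ m := pow_nonneg hDk0 m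
      have h2 : D k ^ m ≤ (δ + ε / 2) ^ n := by
        calc D k ^ m ≤ ((δ + ε / 2) ^ k) ^ m := pow_le_pow_left₀ hDk0 hAk m
        _ = (δ + ε / 2) ^ (m * k) := (pow_mul' _ _ _).symm
        _ ≤ (δ + ε / 2) ^ n := by
            apply pow_le_pow_right₀ hδε1
            omega
      have hmn : (m:ℝ) ≤ (n:ℝ) := by exact_mod_cast Nat.div_le_self n k
      have hn1 : (1:ℝ) ≤ (n:ℝ) := by exact_mod_cast hn
      have h3 : h (φ^[r] P) ≤ B := hBr r hrk
      calc h (φ^[n] P) ≤ D k ^ m * h (φ^[r] P) + m * D k ^ m * C := h1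
      _ ≤ D k ^ m * B + n * D k ^ m * C := by
          have := hnn (φ^[r] P)
          nlinarith [mul_nonneg hDkm hC]
      _ = D k ^ m * (B + n * C) := by ring
      _ ≤ (δ + ε / 2) ^ n * (B + n * C) := by
          apply mul_le_mul_of_nonneg_right h2
          positivity
      _ ≤ (δ + ε / 2) ^ n * ((B + C) * n) := by
          apply mul_le_mul_of_nonneg_left _ (by positivity)
          nlinarith
    -- take n-th roots
    have hroot : ∀ n : ℕ, 1 ≤ n →
        f n ≤ (δ + ε / 2) * ((B + C) ^ ((n:ℝ)⁻¹) * (n:ℝ) ^ ((n:ℝ)⁻¹)) := by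
      intro n hn
      have hn0 : ((n:ℝ)) ≠ 0 := by positivity
      have h1 : f n ≤ ((δ + ε / 2) ^ n * ((B + C) * n)) ^ ((n:ℝ)⁻¹) :=
        Real.rpow_le_rpow (hnn _) (key n hn) (by positivity)
      have h2 : ((δ + ε / 2) ^ n * ((B + C) * n)) ^ ((n:ℝ)⁻¹)
          = (δ + ε / 2) * ((B + C) ^ ((n:ℝ)⁻¹) * (n:ℝ) ^ ((n:ℝ)⁻¹)) := by
        rw [Real.mul_rpow (by positivity) (by positivity),
          Real.mul_rpow (by positivity) (by positivity),
          ← Real.rpow_natCast (δ + ε / 2) n, ← Real.rpow_mul hδε0,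
          mul_inv_cancel₀ hn0, Real.rpow_one]
      rw [h2] at h1; exact h1
    -- the RHS tends to δ + ε/2 < δ + ε
    have hBC0 : (0:ℝ) < B + C := by linarith
    have htend : Tendsto (fun n : ℕ =>
        (δ + ε / 2) * ((B + C) ^ ((n:ℝ)⁻¹) * (n:ℝ) ^ ((n:ℝ)⁻¹))) atTop
        (𝓝 (δ + ε / 2)) := by
      have := ((aux_const_rpow_tendsto (B + C) hBC0).mul
        aux_nat_rpow_tendsto).const_mul (δ + ε / 2)
      simpa using this
    have hev2 : ∀ᶠ n : ℕ in atTop,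
        (δ + ε / 2) * ((B + C) ^ ((n:ℝ)⁻¹) * (n:ℝ) ^ ((n:ℝ)⁻¹)) < δ + ε :=
      htend.eventually_lt_const (by linarith)
    filter_upwards [hev2, eventually_ge_atTop 1] with n h1 h2
    exact (hroot n h2).trans h1.le
  -- boundedness facts
  have hbdd : IsBoundedUnder (· ≤ ·) atTop f :=
    isBoundedUnder_of_eventually_le (hub 1 one_pos)
  have hcobdd : IsCoboundedUnder (· ≤ ·) atTop f :=
    IsCoboundedUnder.of_frequently_ge (Frequently.of_forall fun n => hfnn n)
  -- limsup ≤ δ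
  have hle : limsup f atTop ≤ δ := by
    refine le_of_forall_pos_le_add fun ε hε => ?_
    exact limsup_le_of_le hcobdd (hub ε hε)
  -- lower bound
  have hge : δ ≤ limsup f atTop := by
    obtain ⟨c, hc0, hcL⟩ := exists_between hpos
    have hcT : c ≠ ⊤ := (lt_of_lt_of_le hcL le_top).ne
    set c' : ℝ := c.toReal with hc'def
    have hc' : (0:ℝ) < c' := ENNReal.toReal_pos hc0.ne' hcT
    have hfreq : ∃ᶠ n : ℕ in atTop,
        c < ENNReal.ofReal (h (φ^[n] P) / ((n : ℝ) ^ ℓ * δ ^ n)) :=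
      frequently_lt_of_lt_limsup (by isBoundedDefault) hcL
    -- g n is the lower comparison sequence
    set g : ℕ → ℝ := fun n => c' ^ ((n:ℝ)⁻¹) * (((n:ℝ) ^ ((n:ℝ)⁻¹)) ^ ℓ) * δ
      with hgdef
    have hgt : Tendsto g atTop (𝓝 δ) := by
      have h1 : Tendsto (fun n : ℕ => c' ^ ((n:ℝ)⁻¹)) atTop (𝓝 1) :=
        aux_const_rpow_tendsto c' hc'
      have h2 : Tendsto (fun n : ℕ => ((n:ℝ) ^ ((n:ℝ)⁻¹)) ^ ℓ) atTop (𝓝 1) := by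
        have := aux_nat_rpow_tendsto.rpow_const (Or.inl one_ne_zero) (p := ℓ)
        simpa using this
      have := (h1.mul h2).mul (tendsto_const_nhds (x := δ))
      simpa using this
    refine le_of_forall_pos_le_add fun ε hε => ?_
    have hevg : ∀ᶠ n : ℕ in atTop, δ - ε < g n :=
      hgt.eventually_const_lt (by linarith)
    have hfreq2 : ∃ᶠ n : ℕ in atTop, δ - ε ≤ f n := by
      refine ((hfreq.and_eventually ((eventually_ge_atTop 1).and hevg)).mono ?_)
      rintro n ⟨hcn, hn1, hgn⟩
      have hn0 : ((n:ℝ)) ≠ 0 := by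
        have : (1:ℝ) ≤ (n:ℝ) := by exact_mod_cast hn1
        linarith
      have hnpos : (0:ℝ) < (n:ℝ) := by
        have : (1:ℝ) ≤ (n:ℝ) := by exact_mod_cast hn1
        linarith
      have hd : (0:ℝ) < (n : ℝ) ^ ℓ * δ ^ n := by positivity
      have hlt : c' < h (φ^[n] P) / ((n : ℝ) ^ ℓ * δ ^ n) :=
        (ENNReal.lt_ofReal_iff_toReal_lt hcT).mp hcn
      have hmul : c' * ((n : ℝ) ^ ℓ * δ ^ n) ≤ h (φ^[n] P) :=
        ((lt_div_iff₀ hd).mp hlt).le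
      have hstep : g n ≤ f n := by
        have h1 : (c' * ((n : ℝ) ^ ℓ * δ ^ n)) ^ ((n:ℝ)⁻¹) ≤ f n :=
          Real.rpow_le_rpow (by positivity) hmul (by positivity)
        have e1 : ((n:ℝ) ^ ℓ) ^ ((n:ℝ)⁻¹) = ((n:ℝ) ^ ((n:ℝ)⁻¹)) ^ ℓ := by
          rw [← Real.rpow_mul hnpos.le, ← Real.rpow_mul hnpos.le,
            mul_comm ℓ ((n:ℝ)⁻¹)]
        have e2 : ((δ:ℝ) ^ n) ^ ((n:ℝ)⁻¹) = δ := by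
          rw [← Real.rpow_natCast δ n, ← Real.rpow_mul hδ0.le,
            mul_inv_cancel₀ hn0, Real.rpow_one]
        have h2 : g n = (c' * ((n : ℝ) ^ ℓ * δ ^ n)) ^ ((n:ℝ)⁻¹) := by
          simp only [hgdef]
          rw [Real.mul_rpow hc'.le (by positivity),
            Real.mul_rpow (by positivity) (by positivity), e1, e2]
          ring
        rw [h2]; exact h1
      linarith
    exact sub_le_iff_le_add.mp (le_limsup_of_frequently_le hfreq2 hbdd)
  exact le_antisymm hle hge
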